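/- Consider a parallel-edge network with finite nonempty edge set E, each edge e from s to t with transit time τ_e > 0 and capacity ν_e > 0, a finite player set P with supply rates d_j > 0, and time horizon H > 0, where players receive the information (θ, T(θ)) consisting of the current time and current exit times. Let every player use the strategy ḡ given by: ḡ_{e,j}(θ, T) = ν_e / ∑_{e'∈E'(T)} ν_{e'} if e ∈ E'(T); ḡ_{e,j}(θ, T) = 0 if E'(T) ≠ ∅ and e ∉ E'(T); and ḡ_{e,j}(θ, T) = ν_e / ∑_{e'∈E} ν_{e'} if E'(T) = ∅, where E'(T) = {e ∈ E : T_e < H}. Then in the induced feasible flow over time, the payoff of each player j equals her proportional share of the system optimum: ρ_j = Opt · d_j / (∑_{j'∈P} d_{j'}). -/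

import Mathlib

open MeasureTheory

/-- A flow over time on a parallel-edge network with edge set `E` (edges from `s` to `t`,
with transit times `τ` and capacities `ν`), player set `P` with supply rates `d`, and time
horizon `H`: a family of nonnegative Lebesgue-integrable in- and outflow rate functions
(extended by `0` outside the time horizon) satisfying flow conservation
`∑ e, f⁺ e j θ = d j`. -/
structure FlowOverTime (E P : Type) [Fintype E] [Fintype P]
    (τ ν : E → ℝ) (d : P → ℝ) (H : ℝ) where
  /-- inflow rates `f⁺_{e,j}` -/
  fin : E → P → ℝ → ℝ
  /-- outflow rates `f⁻_{e,j}` -/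
  fout : E → P → ℝ → ℝ
  fin_nonneg : ∀ e j θ, 0 ≤ fin e j θ
  fout_nonneg : ∀ e j θ, 0 ≤ fout e j θ
  fin_supp : ∀ e j θ, θ ∉ Set.Ico (0 : ℝ) H → fin e j θ = 0
  fout_supp : ∀ e j θ, θ ∉ Set.Ico (τ e) H → fout e j θ = 0
  fin_integrable : ∀ e j, Integrable (fin e j)
  fout_integrable : ∀ e j, Integrable (fout e j)
  conservation : ∀ j θ, θ ∈ Set.Ico (0 : ℝ) H → ∑ e, fin e j θ = d j

namespace FlowOverTime

variable {E P : Type} [Fintype E] [Fintype P] {τ ν : E → ℝ} {d : P → ℝ} {H : ℝ}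

/-- Cumulative inflow `F⁺_{e,j}(θ) = ∫₀^θ f⁺_{e,j}`. -/
noncomputable def Fplus (f : FlowOverTime E P τ ν d H) (e : E) (j : P) (θ : ℝ) : ℝ :=
  ∫ t in (0:ℝ)..θ, f.fin e j t

/-- Cumulative outflow `F⁻_{e,j}(θ) = ∫₀^θ f⁻_{e,j}`. -/
noncomputable def Fminus (f : FlowOverTime E P τ ν d H) (e : E) (j : P) (θ : ℝ) : ℝ :=
  ∫ t in (0:ℝ)..θ, f.fout e j t

/-- Queue length `z_e(θ) = ∑_j F⁺_{e,j}(θ) − ∑_j F⁻_{e,j}(θ + τ_e)`. -/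
noncomputable def queue (f : FlowOverTime E P τ ν d H) (e : E) (θ : ℝ) : ℝ :=
  ∑ j, f.Fplus e j θ - ∑ j, f.Fminus e j (θ + τ e)

/-- Exit time `T_e(θ) = θ + z_e(θ)/ν_e + τ_e`. -/
noncomputable def exitTime (f : FlowOverTime E P τ ν d H) (e : E) (θ : ℝ) : ℝ :=
  θ + f.queue e θ / ν e + τ e

open Classical in
/-- Feasibility of a flow over time: non-deficit constraints, the deterministic queuing
condition (edges operate at capacity while the queue is nonempty), and fair merging of
the players' flows (a player's share of the outflow at time `θ` equals her share of the
inflow at time `φ = max T_e⁻¹(θ)`). -/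
def Feasible (f : FlowOverTime E P τ ν d H) : Prop :=
  (∀ e j θ, θ ∈ Set.Ico (0:ℝ) (H - τ e) → f.Fminus e j (θ + τ e) ≤ f.Fplus e j θ) ∧
  (∀ e θ, θ ∈ Set.Ico (0:ℝ) (H - τ e) →
      ∑ j, f.fout e j (θ + τ e) =
        if 0 < f.queue e θ then ν e else min (∑ j, f.fin e j θ) (ν e)) ∧
  (∀ e j θ, θ ∈ Set.Ico (0:ℝ) H → ∀ φ : ℝ,
      IsGreatest {ϑ : ℝ | ϑ ∈ Set.Ico (0:ℝ) H ∧ f.exitTime e ϑ = θ} φ →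
      f.fout e j θ =
        if 0 < ∑ j', f.fin e j' φ
        then (f.fin e j φ / ∑ j', f.fin e j' φ) * ∑ j', f.fout e j' θ
        else 0)

/-- Payoff of player `j`: the amount `∑_e F⁻_{e,j}(H)` of her flow arriving at `t`
before time `H`. -/
noncomputable def payoff (f : FlowOverTime E P τ ν d H) (j : P) : ℝ :=
  ∑ e, f.Fminus e j H

end FlowOverTime

open Classical in
/-- The set of active edges `E'(T) = {e ∈ E : T_e < H}` for a vector of exit times `T`. -/
noncomputable def activeEdges {E : Type} [Fintype E] (H : ℝ) (T : E → ℝ) : Finset E :=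
  Finset.univ.filter (fun e => T e < H)

open Classical in
/-- The strategy `ḡ`: route proportionally to the capacities of the active edges, and
proportionally to all capacities if no edge is active. -/
noncomputable def gbar {E : Type} [Fintype E] (ν : E → ℝ) (H : ℝ)
    (T : E → ℝ) (e : E) : ℝ :=
  if e ∈ activeEdges H T then ν e / ∑ e' ∈ activeEdges H T, ν e'
  else if (activeEdges H T).Nonempty then 0
  else ν e / ∑ e', ν e'

/-- A function of an information state `(θ, T)` is right-Lipschitz if around every point
it is Lipschitz with respect to coordinate-wise nonnegative small perturbations. -/
def RightLipschitz {E : Type} [Fintype E] (g : ℝ → (E → ℝ) → ℝ) : Prop :=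
  ∀ (θ : ℝ) (T : E → ℝ), ∃ L > (0:ℝ), ∃ ε > (0:ℝ), ∀ (δ : ℝ) (x : E → ℝ),
    δ ∈ Set.Icc (0:ℝ) ε → (∀ e, x e ∈ Set.Icc (0:ℝ) ε) →
    |g θ T - g (θ + δ) (fun e => T e + x e)| ≤ L * ‖(δ, x)‖

/-- An admissible strategy with information on exit times: a right-Lipschitz function
`g : [0, H) × ℝ≥0^E → [0, 1]^E` whose components sum to `1`. -/
def Admissible {E : Type} [Fintype E] (g : ℝ → (E → ℝ) → E → ℝ) : Prop :=
  (∀ e, RightLipschitz (fun θ T => g θ T e)) ∧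
  (∀ θ T e, g θ T e ∈ Set.Icc (0:ℝ) 1) ∧
  (∀ θ T, ∑ e, g θ T e = 1)

/-- The feasible flow over time induced by a strategy profile `G` with information on
exit times: player `j` sends flow into edge `e` at rate
`f⁺_{e,j}(θ) = d_j · g_{e,j}(θ, T(θ))` where `T(θ)` is the current exit-time vector. -/
def FlowOverTime.InducedBy {E P : Type} [Fintype E] [Fintype P]
    {τ ν : E → ℝ} {d : P → ℝ} {H : ℝ}
    (f : FlowOverTime E P τ ν d H) (G : P → ℝ → (E → ℝ) → E → ℝ) : Prop :=
  f.Feasible ∧ ∀ e j θ, θ ∈ Set.Ico (0:ℝ) H →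
    f.fin e j θ = d j * G j θ (fun e' => f.exitTime e' θ) e

section Helpers

lemma myInt_congr_Ioo {g h : ℝ → ℝ} {x y : ℝ} (hxy : x ≤ y)
    (heq : ∀ t ∈ Set.Ioo x y, g t = h t) :
    ∫ t in x..y, g t = ∫ t in x..y, h t := by
  rw [intervalIntegral.integral_of_le hxy, intervalIntegral.integral_of_le hxy,
    MeasureTheory.integral_Ioc_eq_integral_Ioo, MeasureTheory.integral_Ioc_eq_integral_Ioo]
  exact MeasureTheory.setIntegral_congr_fun measurableSet_Ioo heq

lemma myInt_zero_Ioo {g : ℝ → ℝ} {x y : ℝ} (hxy : x ≤ y)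
    (heq : ∀ t ∈ Set.Ioo x y, g t = 0) :
    ∫ t in x..y, g t = 0 := by
  rw [myInt_congr_Ioo hxy heq]; simp

lemma myInt_const_Ioo {g : ℝ → ℝ} {x y c : ℝ} (hxy : x ≤ y)
    (heq : ∀ t ∈ Set.Ioo x y, g t = c) :
    ∫ t in x..y, g t = c * (y - x) := by
  rw [myInt_congr_Ioo hxy heq]; simp [mul_comm]

lemma myInt_mono_Ioo {g h : ℝ → ℝ} {x y : ℝ} (hxy : x ≤ y)
    (hg : MeasureTheory.IntegrableOn g (Set.Ioo x y))
    (hh : MeasureTheory.IntegrableOn h (Set.Ioo x y))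
    (hle : ∀ t ∈ Set.Ioo x y, g t ≤ h t) :
    ∫ t in x..y, g t ≤ ∫ t in x..y, h t := by
  rw [intervalIntegral.integral_of_le hxy, intervalIntegral.integral_of_le hxy,
    MeasureTheory.integral_Ioc_eq_integral_Ioo, MeasureTheory.integral_Ioc_eq_integral_Ioo]
  exact MeasureTheory.setIntegral_mono_on hg hh measurableSet_Ioo hle

lemma myInt_nonneg_Ioo {g : ℝ → ℝ} {x y : ℝ} (hxy : x ≤ y)
    (hle : ∀ t ∈ Set.Ioo x y, 0 ≤ g t) :
    0 ≤ ∫ t in x..y, g t := by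
  rw [intervalIntegral.integral_of_le hxy, MeasureTheory.integral_Ioc_eq_integral_Ioo]
  exact MeasureTheory.setIntegral_nonneg measurableSet_Ioo hle

end Helpers

namespace FlowOverTime

variable {E P : Type} [Fintype E] [Fintype P] {τ ν : E → ℝ} {d : P → ℝ} {H : ℝ}
variable (f : FlowOverTime E P τ ν d H)

/-- total inflow rate into edge `e` -/
noncomputable def aRate (e : E) (θ : ℝ) : ℝ := ∑ j, f.fin e j θ

/-- total outflow rate out of edge `e` -/
noncomputable def bRate (e : E) (σ : ℝ) : ℝ := ∑ j, f.fout e j σ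

/-- total cumulative inflow -/
noncomputable def FPs (e : E) (θ : ℝ) : ℝ := ∑ j, f.Fplus e j θ

/-- total cumulative outflow -/
noncomputable def FMs (e : E) (σ : ℝ) : ℝ := ∑ j, f.Fminus e j σ

lemma aRate_integrable (e : E) : MeasureTheory.Integrable (f.aRate e) :=
  MeasureTheory.integrable_finset_sum _ (fun j _ => f.fin_integrable e j)

lemma bRate_integrable (e : E) : MeasureTheory.Integrable (f.bRate e) :=
  MeasureTheory.integrable_finset_sum _ (fun j _ => f.fout_integrable e j)

lemma aRate_nonneg (e : E) (θ : ℝ) : 0 ≤ f.aRate e θ :=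
  Finset.sum_nonneg fun j _ => f.fin_nonneg e j θ

lemma bRate_nonneg (e : E) (σ : ℝ) : 0 ≤ f.bRate e σ :=
  Finset.sum_nonneg fun j _ => f.fout_nonneg e j σ

lemma aRate_supp (e : E) (θ : ℝ) (h : θ ∉ Set.Ico (0:ℝ) H) : f.aRate e θ = 0 :=
  Finset.sum_eq_zero fun j _ => f.fin_supp e j θ h

lemma bRate_supp (e : E) (σ : ℝ) (h : σ ∉ Set.Ico (τ e) H) : f.bRate e σ = 0 :=
  Finset.sum_eq_zero fun j _ => f.fout_supp e j σ h

lemma FPs_eq (e : E) (θ : ℝ) : f.FPs e θ = ∫ t in (0:ℝ)..θ, f.aRate e t := by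
  simp only [FPs, aRate, Fplus]
  rw [intervalIntegral.integral_finset_sum (fun j _ => (f.fin_integrable e j).intervalIntegrable)]

lemma FMs_eq (e : E) (σ : ℝ) : f.FMs e σ = ∫ t in (0:ℝ)..σ, f.bRate e t := by
  simp only [FMs, bRate, Fminus]
  rw [intervalIntegral.integral_finset_sum (fun j _ => (f.fout_integrable e j).intervalIntegrable)]

lemma FPs_diff (e : E) (x y : ℝ) : f.FPs e y - f.FPs e x = ∫ t in x..y, f.aRate e t := by
  rw [FPs_eq, FPs_eq,
    intervalIntegral.integral_interval_sub_left (f.aRate_integrable e).intervalIntegrable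
      (f.aRate_integrable e).intervalIntegrable]

lemma FMs_diff (e : E) (x y : ℝ) : f.FMs e y - f.FMs e x = ∫ t in x..y, f.bRate e t := by
  rw [FMs_eq, FMs_eq,
    intervalIntegral.integral_interval_sub_left (f.bRate_integrable e).intervalIntegrable
      (f.bRate_integrable e).intervalIntegrable]

lemma FPs_mono (e : E) : Monotone (f.FPs e) := by
  intro x y hxy
  have h := f.FPs_diff e x y
  have : 0 ≤ ∫ t in x..y, f.aRate e t :=
    myInt_nonneg_Ioo hxy (fun t _ => f.aRate_nonneg e t)
  linarith

lemma FMs_mono (e : E) : Monotone (f.FMs e) := by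
  intro x y hxy
  have h := f.FMs_diff e x y
  have : 0 ≤ ∫ t in x..y, f.bRate e t :=
    myInt_nonneg_Ioo hxy (fun t _ => f.bRate_nonneg e t)
  linarith

lemma FPs_zero_of_nonpos (e : E) {θ : ℝ} (hθ : θ ≤ 0) : f.FPs e θ = 0 := by
  rw [FPs_eq, intervalIntegral.integral_symm]
  rw [myInt_zero_Ioo hθ (fun t ht => f.aRate_supp e t (by simp [Set.mem_Ico]; intro h; linarith [ht.2]))]
  simp

lemma FPs_nonneg (e : E) (θ : ℝ) : 0 ≤ f.FPs e θ := by
  rcases le_total θ 0 with h | h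
  · rw [f.FPs_zero_of_nonpos e h]
  · rw [← f.FPs_zero_of_nonpos e (le_refl 0)]
    exact f.FPs_mono e h

lemma FMs_zero_of_le_tau (e : E) {σ : ℝ} (hσ : σ ≤ τ e) (hτ : 0 < τ e) : f.FMs e σ = 0 := by
  rcases le_total σ 0 with h | h
  · rw [FMs_eq, intervalIntegral.integral_symm]
    rw [myInt_zero_Ioo h (fun t ht => f.bRate_supp e t (by simp [Set.mem_Ico]; intro h2; linarith [ht.2]))]
    simp
  · rw [FMs_eq]
    exact myInt_zero_Ioo h (fun t ht => f.bRate_supp e t (by simp [Set.mem_Ico]; intro h2; linarith [ht.2]))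

lemma FMs_zero_zero (e : E) : f.FMs e 0 = 0 := by
  rw [FMs_eq]; simp

lemma FMs_nonneg (e : E) {σ : ℝ} (hτ : 0 < τ e) : 0 ≤ f.FMs e σ := by
  rcases le_total σ 0 with h | h
  · rw [f.FMs_zero_of_le_tau e (h.trans hτ.le) hτ]
  · rw [← f.FMs_zero_zero e]
    exact f.FMs_mono e h

lemma FMs_stall (e : E) {σ : ℝ} (hσ : H ≤ σ) : f.FMs e σ = f.FMs e H := by
  have h := f.FMs_diff e H σ
  rw [myInt_zero_Ioo hσ (fun t ht => f.bRate_supp e t (by simp [Set.mem_Ico]; intro h2; linarith [ht.1]))] at h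
  linarith

lemma queue_eq (e : E) (θ : ℝ) : f.queue e θ = f.FPs e θ - f.FMs e (θ + τ e) := rfl

lemma cont_FPs (e : E) : Continuous (f.FPs e) := by
  have : Continuous fun θ => ∫ t in (0:ℝ)..θ, f.aRate e t :=
    intervalIntegral.continuous_primitive (fun a b => (f.aRate_integrable e).intervalIntegrable) 0
  simpa [funext (f.FPs_eq e)] using this

lemma cont_FMs (e : E) : Continuous (f.FMs e) := by
  have : Continuous fun σ => ∫ t in (0:ℝ)..σ, f.bRate e t :=
    intervalIntegral.continuous_primitive (fun a b => (f.bRate_integrable e).intervalIntegrable) 0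
  simpa [funext (f.FMs_eq e)] using this

lemma cont_queue (e : E) : Continuous (f.queue e) := by
  have : Continuous fun θ : ℝ => f.FPs e θ - f.FMs e (θ + τ e) :=
    (f.cont_FPs e).sub ((f.cont_FMs e).comp (continuous_id.add continuous_const))
  simpa [funext (f.queue_eq e)] using this

lemma cont_exitTime (e : E) : Continuous (f.exitTime e) := by
  have : Continuous fun θ : ℝ => θ + f.queue e θ / ν e + τ e :=
    ((continuous_id.add ((f.cont_queue e).div_const _)).add continuous_const)
  exact this


lemma bRate_le (hfe : f.Feasible) (hν : ∀ e, 0 < ν e) (e : E) (σ : ℝ) :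
    f.bRate e σ ≤ ν e := by
  by_cases h : σ ∈ Set.Ico (τ e) H
  · have h2 : σ - τ e ∈ Set.Ico (0:ℝ) (H - τ e) := ⟨by linarith [h.1], by linarith [h.2]⟩
    have h3 := hfe.2.1 e (σ - τ e) h2
    rw [sub_add_cancel] at h3
    rw [bRate, h3]
    split
    · exact le_rfl
    · exact min_le_right _ _
  · rw [f.bRate_supp e σ h]; exact (hν e).le

lemma nondeficit_sum (hfe : f.Feasible) (e : E) {θ : ℝ} (hθ : θ ∈ Set.Ico (0:ℝ) (H - τ e)) :
    f.FMs e (θ + τ e) ≤ f.FPs e θ :=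
  Finset.sum_le_sum fun j _ => hfe.1 e j θ hθ

lemma nondeficit_H (hfe : f.Feasible) (e : E) (hτ : 0 < τ e) :
    f.FMs e H ≤ f.FPs e (max (H - τ e) 0) := by
  by_cases hpos : 0 < H - τ e
  · rw [max_eq_left hpos.le]
    have h1 : Filter.Tendsto (fun θ => f.FMs e (θ + τ e)) (nhdsWithin (H - τ e) (Set.Iio (H - τ e)))
        (nhds (f.FMs e H)) := by
      have hc : Continuous fun θ : ℝ => f.FMs e (θ + τ e) :=
        (f.cont_FMs e).comp (continuous_id.add continuous_const)
      have := hc.tendsto (H - τ e)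
      rw [show H - τ e + τ e = H by ring] at this
      exact this.mono_left nhdsWithin_le_nhds
    have h2 : Filter.Tendsto (fun θ => f.FPs e θ) (nhdsWithin (H - τ e) (Set.Iio (H - τ e)))
        (nhds (f.FPs e (H - τ e))) :=
      ((f.cont_FPs e).tendsto (H - τ e)).mono_left nhdsWithin_le_nhds
    refine le_of_tendsto_of_tendsto h1 h2 ?_
    filter_upwards [Ioo_mem_nhdsLT_of_mem (Set.mem_Ioc.mpr ⟨hpos, le_rfl⟩) (a := 0)] with θ hθ
    exact f.nondeficit_sum hfe e ⟨hθ.1.le, hθ.2⟩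
  · rw [f.FMs_zero_of_le_tau e (by linarith) hτ]
    exact f.FPs_nonneg e _

lemma queue_nonneg (hfe : f.Feasible) (e : E) (hτ : 0 < τ e) (θ : ℝ) :
    0 ≤ f.queue e θ := by
  rw [queue_eq]
  by_cases h0 : θ < 0
  · rw [f.FPs_zero_of_nonpos e h0.le, f.FMs_zero_of_le_tau e (by linarith) hτ]
    simp
  · push_neg at h0
    by_cases h1 : θ < H - τ e
    · linarith [f.nondeficit_sum hfe e ⟨h0, h1⟩]
    · push_neg at h1
      have hs : f.FMs e (θ + τ e) = f.FMs e H := f.FMs_stall e (by linarith)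
      have h2 := f.nondeficit_H hfe e hτ
      have h3 : f.FPs e (max (H - τ e) 0) ≤ f.FPs e θ :=
        f.FPs_mono e (max_le h1 h0)
      linarith

lemma queue_zero_at_zero (e : E) (hτ : 0 < τ e) : f.queue e 0 = 0 := by
  rw [queue_eq, f.FPs_zero_of_nonpos e le_rfl, f.FMs_zero_of_le_tau e (by linarith) hτ]
  ring

lemma queue_zero_of_nonpos (e : E) (hτ : 0 < τ e) {θ : ℝ} (hθ : θ ≤ 0) : f.queue e θ = 0 := by
  rw [queue_eq, f.FPs_zero_of_nonpos e hθ, f.FMs_zero_of_le_tau e (by linarith) hτ]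
  ring

lemma exitTime_def (e : E) (θ : ℝ) :
    f.exitTime e θ = θ + f.queue e θ / ν e + τ e := rfl

lemma exitTime_lb (hfe : f.Feasible) (e : E) (hτ : 0 < τ e) (hν : 0 < ν e) (θ : ℝ) :
    θ + τ e ≤ f.exitTime e θ := by
  have := div_nonneg (f.queue_nonneg hfe e hτ θ) hν.le
  rw [exitTime_def]; linarith

lemma exitTime_zero (e : E) (hτ : 0 < τ e) : f.exitTime e 0 = τ e := by
  rw [exitTime_def, f.queue_zero_at_zero e hτ]
  simp

lemma exitTime_mono (hfe : f.Feasible) (hν : ∀ e, 0 < ν e) (e : E) :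
    Monotone (f.exitTime e) := by
  intro x y hxy
  have hq : f.queue e y - f.queue e x
      = (∫ t in x..y, f.aRate e t) - ∫ t in (x + τ e)..(y + τ e), f.bRate e t := by
    rw [queue_eq, queue_eq]
    have h1 := f.FPs_diff e x y
    have h2 := f.FMs_diff e (x + τ e) (y + τ e)
    linarith
  have ha : 0 ≤ ∫ t in x..y, f.aRate e t :=
    myInt_nonneg_Ioo hxy fun t _ => f.aRate_nonneg e t
  have hb : ∫ t in (x + τ e)..(y + τ e), f.bRate e t ≤ ν e * (y - x) := by
    have hle : ∫ t in (x + τ e)..(y + τ e), f.bRate e t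
        ≤ ∫ _t in (x + τ e)..(y + τ e), ν e := by
      refine myInt_mono_Ioo (by linarith) ((f.bRate_integrable e).integrableOn)
        ((MeasureTheory.integrableOn_const_iff).mpr (Or.inr measure_Ioo_lt_top)) ?_
      exact fun t _ => f.bRate_le hfe hν e t
    rw [intervalIntegral.integral_const] at hle
    have : (y + τ e - (x + τ e)) • ν e = ν e * (y - x) := by
      rw [smul_eq_mul]; ring
    linarith [hle.trans_eq this]
  have hν' := hν e
  have hkey : -(y - x) ≤ (f.queue e y - f.queue e x) / ν e := by
    rw [le_div_iff₀ hν']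
    nlinarith
  rw [exitTime_def, exitTime_def]
  have : (f.queue e y - f.queue e x) / ν e = f.queue e y / ν e - f.queue e x / ν e :=
    sub_div _ _ _
  rw [this] at hkey
  linarith

lemma exists_greatest_phi (hfe : f.Feasible) (hν : ∀ e, 0 < ν e) (hτ : ∀ e, 0 < τ e)
    (e : E) {σ : ℝ} (hσ : σ ∈ Set.Ico (τ e) H) :
    ∃ φ, IsGreatest {ϑ : ℝ | ϑ ∈ Set.Ico (0:ℝ) H ∧ f.exitTime e ϑ = σ} φ
      ∧ φ ∈ Set.Ico (0:ℝ) H := by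
  have h0στ : (0:ℝ) ≤ σ - τ e := by linarith [hσ.1]
  have hIVT := intermediate_value_Icc h0στ ((f.cont_exitTime e).continuousOn
    (s := Set.Icc 0 (σ - τ e)))
  have hmem : σ ∈ Set.Icc (f.exitTime e 0) (f.exitTime e (σ - τ e)) := by
    constructor
    · rw [f.exitTime_zero e (hτ e)]; exact hσ.1
    · have := f.exitTime_lb hfe e (hτ e) (hν e) (σ - τ e)
      linarith
  obtain ⟨ϑ₀, hϑ₀, hTϑ₀⟩ := hIVT hmem
  set S : Set ℝ := Set.Icc 0 (σ - τ e) ∩ (f.exitTime e)⁻¹' {σ} with hS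
  have hSne : S.Nonempty := ⟨ϑ₀, hϑ₀, hTϑ₀⟩
  have hScl : IsClosed S := isClosed_Icc.inter (isClosed_singleton.preimage (f.cont_exitTime e))
  have hSbdd : BddAbove S := (bddAbove_Icc).mono Set.inter_subset_left
  have hφS : sSup S ∈ S := hScl.csSup_mem hSne hSbdd
  have hEq : {ϑ : ℝ | ϑ ∈ Set.Ico (0:ℝ) H ∧ f.exitTime e ϑ = σ} = S := by
    ext ϑ
    simp only [hS, Set.mem_setOf_eq, Set.mem_inter_iff, Set.mem_Icc, Set.mem_Ico,
      Set.mem_preimage, Set.mem_singleton_iff]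
    constructor
    · rintro ⟨⟨h0, _⟩, hT⟩
      refine ⟨⟨h0, ?_⟩, hT⟩
      have := f.exitTime_lb hfe e (hτ e) (hν e) ϑ
      rw [hT] at this; linarith
    · rintro ⟨⟨h0, hle⟩, hT⟩
      have hτH := hτ e
      exact ⟨⟨h0, by linarith [hσ.2]⟩, hT⟩
  refine ⟨sSup S, ?_, ?_⟩
  · rw [hEq]
    exact ⟨hφS, fun x hx => le_csSup hSbdd hx⟩
  · refine ⟨hφS.1.1, ?_⟩
    have := hφS.1.2
    have hτH := hτ e
    linarith [hσ.2]


lemma fout_split (hν : ∀ e, 0 < ν e) (hτ : ∀ e, 0 < τ e) (hD : 0 < ∑ j, d j)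
    (hf : f.InducedBy (fun _ θ T e => gbar ν H T e)) (e : E) (j : P) (σ : ℝ) :
    f.fout e j σ = (d j / ∑ j', d j') * f.bRate e σ := by
  by_cases hσ : σ ∈ Set.Ico (τ e) H
  · obtain ⟨φ, hG, hφ⟩ := f.exists_greatest_phi hf.1 hν hτ e hσ
    have hσIco : σ ∈ Set.Ico (0:ℝ) H := ⟨(hτ e).le.trans hσ.1, hσ.2⟩
    have hfin : ∀ j', f.fin e j' φ = d j' * gbar ν H (fun e' => f.exitTime e' φ) e :=
      fun j' => hf.2 e j' φ hφ
    set g := gbar ν H (fun e' => f.exitTime e' φ) e with hg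
    have hsum : ∑ j', f.fin e j' φ = (∑ j', d j') * g := by
      simp only [hfin]; rw [← Finset.sum_mul]
    by_cases hpos : 0 < ∑ j', f.fin e j' φ
    · have hm := hf.1.2.2 e j σ hσIco φ hG
      rw [if_pos hpos] at hm
      have hgne : g ≠ 0 := by
        intro h0
        rw [hsum, h0, mul_zero] at hpos
        exact lt_irrefl 0 hpos
      rw [hm, hfin j, hsum]
      have hratio : d j * g / ((∑ j', d j') * g) = d j / ∑ j', d j' := by
        rw [mul_comm (d j) g, mul_comm (∑ j', d j') g, mul_div_mul_left _ _ hgne]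
      rw [hratio]
      rfl
    · have hz : ∀ j', f.fout e j' σ = 0 := by
        intro j'
        have hm := hf.1.2.2 e j' σ hσIco φ hG
        rwa [if_neg hpos] at hm
      rw [hz j, bRate, Finset.sum_eq_zero (fun j' _ => hz j'), mul_zero]
  · rw [f.fout_supp e j σ hσ, f.bRate_supp e σ hσ, mul_zero]

lemma payoff_split (hν : ∀ e, 0 < ν e) (hτ : ∀ e, 0 < τ e) (hD : 0 < ∑ j, d j)
    (hf : f.InducedBy (fun _ θ T e => gbar ν H T e)) (j : P) :
    f.payoff j = (d j / ∑ j', d j') * ∑ e, f.FMs e H := by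
  rw [payoff, Finset.mul_sum]
  refine Finset.sum_congr rfl fun e _ => ?_
  have h1 : f.Fminus e j H = ∫ t in (0:ℝ)..H, (d j / ∑ j', d j') * f.bRate e t := by
    rw [Fminus]
    exact intervalIntegral.integral_congr fun t _ => f.fout_split hν hτ hD hf e j t
  rw [h1, intervalIntegral.integral_const_mul, ← f.FMs_eq e H]


/-- the last time at which some edge is active -/
noncomputable def tbar : ℝ := sSup {θ : ℝ | ∃ e, f.exitTime e θ < H}

/-- sum of capacities of active edges -/
noncomputable def nuA (θ : ℝ) : ℝ :=
  ∑ e' ∈ activeEdges H (fun e'' => f.exitTime e'' θ), ν e'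

/-- the onset of congestion -/
noncomputable def that (D : ℝ) : ℝ :=
  sInf ({f.tbar} ∪ {θ : ℝ | θ ∈ Set.Icc 0 f.tbar ∧ f.nuA θ < D})

lemma mem_active_iff (θ : ℝ) (e : E) :
    e ∈ activeEdges H (fun e'' => f.exitTime e'' θ) ↔ f.exitTime e θ < H := by
  simp [activeEdges]

section Tbar

variable [Nonempty E]

lemma tbar_bddAbove (hfe : f.Feasible) (hν : ∀ e, 0 < ν e) (hτ : ∀ e, 0 < τ e) :
    ∀ θ ∈ {θ : ℝ | ∃ e, f.exitTime e θ < H},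
      θ ≤ H - Finset.univ.inf' Finset.univ_nonempty τ := by
  rintro θ ⟨e, he⟩
  have h1 := f.exitTime_lb hfe e (hτ e) (hν e) θ
  have h2 : Finset.univ.inf' Finset.univ_nonempty τ ≤ τ e :=
    Finset.inf'_le _ (Finset.mem_univ e)
  linarith

lemma taumin_pos (hτ : ∀ e, 0 < τ e) :
    0 < Finset.univ.inf' (Finset.univ_nonempty (α := E)) τ := by
  rw [Finset.lt_inf'_iff]
  exact fun e _ => hτ e

lemma tbar_nonneg (hfe : f.Feasible) (hν : ∀ e, 0 < ν e) (hτ : ∀ e, 0 < τ e)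
    (he₀ : ∃ e₀, τ e₀ < H) : 0 ≤ f.tbar := by
  obtain ⟨e₀, he₀⟩ := he₀
  refine le_csSup ⟨_, fun θ hθ => f.tbar_bddAbove hfe hν hτ θ hθ⟩ ⟨e₀, ?_⟩
  rw [f.exitTime_zero e₀ (hτ e₀)]
  exact he₀

lemma tbar_lt_H (hfe : f.Feasible) (hν : ∀ e, 0 < ν e) (hτ : ∀ e, 0 < τ e)
    (he₀ : ∃ e₀, τ e₀ < H) : f.tbar < H := by
  obtain ⟨e₀, he₀'⟩ := he₀
  have hne : {θ : ℝ | ∃ e, f.exitTime e θ < H}.Nonempty :=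
    ⟨0, e₀, by rw [f.exitTime_zero e₀ (hτ e₀)]; exact he₀'⟩
  have h1 : f.tbar ≤ H - Finset.univ.inf' Finset.univ_nonempty τ :=
    csSup_le hne (f.tbar_bddAbove hfe hν hτ)
  have h2 := taumin_pos (E := E) (τ := τ) hτ
  linarith

lemma active_nonempty_of_lt_tbar (hfe : f.Feasible) (hν : ∀ e, 0 < ν e) (hτ : ∀ e, 0 < τ e)
    {θ : ℝ} (hθ : θ < f.tbar) :
    ∃ e, f.exitTime e θ < H := by
  have e₀ := Classical.arbitrary E
  have hne : {θ : ℝ | ∃ e, f.exitTime e θ < H}.Nonempty := by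
    refine ⟨min 0 (H - τ e₀) - 1, e₀, ?_⟩
    have hle : min 0 (H - τ e₀) - 1 ≤ 0 := by
      have := min_le_left 0 (H - τ e₀); linarith
    rw [exitTime_def, f.queue_zero_of_nonpos e₀ (hτ e₀) hle, zero_div, add_zero]
    have := min_le_right 0 (H - τ e₀)
    linarith
  obtain ⟨θ', ⟨e, hθ'⟩, hlt⟩ := exists_lt_of_lt_csSup hne hθ
  exact ⟨e, lt_of_le_of_lt (f.exitTime_mono hfe hν e hlt.le) hθ'⟩

lemma le_tbar_of_active (hfe : f.Feasible) (hν : ∀ e, 0 < ν e) (hτ : ∀ e, 0 < τ e)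
    {θ : ℝ} {e : E} (h : f.exitTime e θ < H) : θ ≤ f.tbar :=
  le_csSup ⟨_, fun θ' hθ' => f.tbar_bddAbove hfe hν hτ θ' hθ'⟩ ⟨e, h⟩

lemma nuA_anti (hfe : f.Feasible) (hν : ∀ e, 0 < ν e) {θ₁ θ₂ : ℝ} (h : θ₁ ≤ θ₂) :
    f.nuA θ₂ ≤ f.nuA θ₁ := by
  refine Finset.sum_le_sum_of_subset_of_nonneg ?_ (fun e _ _ => (hν e).le)
  intro e he
  rw [f.mem_active_iff] at he ⊢
  exact lt_of_le_of_lt (f.exitTime_mono hfe hν e h) he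

lemma that_nonneg (hfe : f.Feasible) (hν : ∀ e, 0 < ν e) (hτ : ∀ e, 0 < τ e)
    (he₀ : ∃ e₀, τ e₀ < H) (D : ℝ) : 0 ≤ f.that D := by
  refine le_csInf ⟨f.tbar, Set.mem_union_left _ rfl⟩ ?_
  rintro x (hx | hx)
  · rw [Set.mem_singleton_iff] at hx
    rw [hx]; exact f.tbar_nonneg hfe hν hτ he₀
  · exact hx.1.1

lemma that_bddBelow (hfe : f.Feasible) (hν : ∀ e, 0 < ν e) (hτ : ∀ e, 0 < τ e)
    (he₀ : ∃ e₀, τ e₀ < H) (D : ℝ) :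
    BddBelow ({f.tbar} ∪ {θ : ℝ | θ ∈ Set.Icc 0 f.tbar ∧ f.nuA θ < D}) := by
  refine ⟨0, ?_⟩
  rintro x (hx | hx)
  · rw [Set.mem_singleton_iff] at hx
    rw [hx]; exact f.tbar_nonneg hfe hν hτ he₀
  · exact hx.1.1

lemma that_le_tbar (hfe : f.Feasible) (hν : ∀ e, 0 < ν e) (hτ : ∀ e, 0 < τ e)
    (he₀ : ∃ e₀, τ e₀ < H) (D : ℝ) : f.that D ≤ f.tbar :=
  csInf_le (f.that_bddBelow hfe hν hτ he₀ D) (Set.mem_union_left _ rfl)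

lemma D_le_nuA_of_lt_that (hfe : f.Feasible) (hν : ∀ e, 0 < ν e) (hτ : ∀ e, 0 < τ e)
    (he₀ : ∃ e₀, τ e₀ < H) {D θ : ℝ} (h0 : 0 ≤ θ) (h1 : θ < f.that D) :
    D ≤ f.nuA θ := by
  by_contra h
  push_neg at h
  have hθtb : θ ≤ f.tbar := h1.le.trans (f.that_le_tbar hfe hν hτ he₀ D)
  have : f.that D ≤ θ :=
    csInf_le (f.that_bddBelow hfe hν hτ he₀ D) (Set.mem_union_right _ ⟨⟨h0, hθtb⟩, h⟩)
  linarith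

lemma nuA_lt_D_of_gt_that (hfe : f.Feasible) (hν : ∀ e, 0 < ν e) (hτ : ∀ e, 0 < τ e)
    (he₀ : ∃ e₀, τ e₀ < H) {D θ : ℝ} (h1 : f.that D < θ) (h2 : θ ≤ f.tbar) :
    f.nuA θ < D := by
  have h1' : sInf ({f.tbar} ∪ {θ : ℝ | θ ∈ Set.Icc 0 f.tbar ∧ f.nuA θ < D}) < θ := h1
  obtain ⟨u, hu, hult⟩ := exists_lt_of_csInf_lt
    (s := {f.tbar} ∪ {θ : ℝ | θ ∈ Set.Icc 0 f.tbar ∧ f.nuA θ < D})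
    ⟨f.tbar, Set.mem_union_left _ rfl⟩ h1'
  rcases hu with hu | hu
  · rw [Set.mem_singleton_iff] at hu
    exact absurd (lt_of_lt_of_le hult h2) (hu ▸ lt_irrefl _)
  · exact lt_of_le_of_lt (f.nuA_anti hfe hν hult.le) hu.2

end Tbar


lemma aRate_induced (hf : f.InducedBy (fun _ θ T e => gbar ν H T e)) (e : E) {θ : ℝ}
    (hθ : θ ∈ Set.Ico (0:ℝ) H) :
    f.aRate e θ = (∑ j, d j) * gbar ν H (fun e' => f.exitTime e' θ) e := by
  rw [aRate, Finset.sum_congr rfl (fun j _ => hf.2 e j θ hθ), ← Finset.sum_mul]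

section Induced

variable [Nonempty E]
variable (hν : ∀ e, 0 < ν e) (hτ : ∀ e, 0 < τ e) (he₀ : ∃ e₀, τ e₀ < H)
variable (hD : 0 < ∑ j, d j)
variable (hf : f.InducedBy (fun _ θ T e => gbar ν H T e))

include hν hτ he₀ hD hf

lemma aRate_le_nu (e : E) {θ : ℝ} (h0 : 0 ≤ θ) (hθtb : θ < f.tbar)
    (hDν : (∑ j, d j) ≤ f.nuA θ) : f.aRate e θ ≤ ν e := by
  have hfe := hf.1
  have hθH : θ < H := hθtb.trans (f.tbar_lt_H hfe hν hτ he₀)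
  rw [f.aRate_induced hf e ⟨h0, hθH⟩]
  by_cases hin : e ∈ activeEdges H (fun e'' => f.exitTime e'' θ)
  · have hg : gbar ν H (fun e' => f.exitTime e' θ) e = ν e / f.nuA θ := by
      rw [gbar, if_pos hin]; rfl
    rw [hg]
    have hνA_pos : 0 < f.nuA θ := lt_of_lt_of_le hD hDν
    have h1 : (∑ j, d j) * (ν e / f.nuA θ) = ν e * ((∑ j, d j) / f.nuA θ) := by ring
    rw [h1]
    calc ν e * ((∑ j, d j) / f.nuA θ) ≤ ν e * 1 :=
          mul_le_mul_of_nonneg_left ((div_le_one hνA_pos).mpr hDν) (hν e).le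
      _ = ν e := mul_one _
  · obtain ⟨e', he'⟩ := f.active_nonempty_of_lt_tbar hfe hν hτ hθtb
    have hne : (activeEdges H (fun e'' => f.exitTime e'' θ)).Nonempty :=
      ⟨e', (f.mem_active_iff θ e').mpr he'⟩
    rw [gbar, if_neg hin, if_pos hne, mul_zero]
    exact (hν e).le

lemma aRate_inactive_zero (e : E) {θ : ℝ} (h0 : 0 ≤ θ) (hθtb : θ < f.tbar)
    (hin : ¬ f.exitTime e θ < H) : f.aRate e θ = 0 := by
  have hfe := hf.1
  have hθH : θ < H := hθtb.trans (f.tbar_lt_H hfe hν hτ he₀)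
  rw [f.aRate_induced hf e ⟨h0, hθH⟩]
  obtain ⟨e', he'⟩ := f.active_nonempty_of_lt_tbar hfe hν hτ hθtb
  have hne : (activeEdges H (fun e'' => f.exitTime e'' θ)).Nonempty :=
    ⟨e', (f.mem_active_iff θ e').mpr he'⟩
  have hin' : e ∉ activeEdges H (fun e'' => f.exitTime e'' θ) := by
    rw [f.mem_active_iff]; exact hin
  rw [gbar, if_neg hin', if_pos hne, mul_zero]

lemma queue_zero_phase1 (e : E) {θ₀ : ℝ}
    (h0 : 0 ≤ θ₀) (h1 : θ₀ ≤ f.that (∑ j, d j)) (h2 : θ₀ ≤ H - τ e) :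
    f.queue e θ₀ = 0 := by
  have hfe := hf.1
  by_contra hne0
  have hqpos : 0 < f.queue e θ₀ := (f.queue_nonneg hfe e (hτ e) θ₀).lt_of_ne (Ne.symm hne0)
  set W := Set.Icc 0 θ₀ ∩ (f.queue e)⁻¹' {0} with hW
  have hWne : W.Nonempty := ⟨0, ⟨le_rfl, h0⟩, by
    simp [Set.mem_preimage, f.queue_zero_at_zero e (hτ e)]⟩
  have hWcl : IsClosed W := isClosed_Icc.inter (isClosed_singleton.preimage (f.cont_queue e))
  have hWbdd : BddAbove W := bddAbove_Icc.mono Set.inter_subset_left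
  have hwmem := hWcl.csSup_mem hWne hWbdd
  set w := sSup W with hwdef
  have hw0 : 0 ≤ w := hwmem.1.1
  have hwθ : w ≤ θ₀ := hwmem.1.2
  have hwq : f.queue e w = 0 := hwmem.2
  have hwne : w ≠ θ₀ := by
    intro hEq
    rw [hEq] at hwq
    rw [hwq] at hqpos
    exact lt_irrefl _ hqpos
  have hwlt : w < θ₀ := lt_of_le_of_ne hwθ hwne
  have hqpos' : ∀ s ∈ Set.Ioo w θ₀, 0 < f.queue e s := by
    intro s hs
    rcases (f.queue_nonneg hfe e (hτ e) s).lt_or_eq with h | h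
    · exact h
    · exact absurd (le_csSup hWbdd ⟨⟨hw0.trans hs.1.le, hs.2.le⟩, h.symm⟩) (not_le.mpr hs.1)
  have hbconst : ∫ s in w..θ₀, f.bRate e (s + τ e) = ν e * (θ₀ - w) := by
    refine myInt_const_Ioo hwlt.le ?_
    intro s hs
    have hqc := hfe.2.1 e s ⟨hw0.trans hs.1.le, lt_of_lt_of_le hs.2 (by linarith)⟩
    rwa [if_pos (hqpos' s hs)] at hqc
  have hale : ∫ s in w..θ₀, f.aRate e s ≤ ν e * (θ₀ - w) := by
    have hmono : ∫ s in w..θ₀, f.aRate e s ≤ ∫ _s in w..θ₀, ν e := by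
      refine myInt_mono_Ioo hwlt.le ((f.aRate_integrable e).integrableOn)
        ((MeasureTheory.integrableOn_const_iff).mpr (Or.inr measure_Ioo_lt_top)) ?_
      intro s hs
      refine f.aRate_le_nu hν hτ he₀ hD hf e (hw0.trans hs.1.le) ?_ ?_
      · exact lt_of_lt_of_le (lt_of_lt_of_le hs.2 h1) (f.that_le_tbar hfe hν hτ he₀ _)
      · exact f.D_le_nuA_of_lt_that hfe hν hτ he₀ (hw0.trans hs.1.le)
          (lt_of_lt_of_le hs.2 h1)
    rw [intervalIntegral.integral_const, smul_eq_mul] at hmono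
    calc ∫ s in w..θ₀, f.aRate e s ≤ (θ₀ - w) * ν e := hmono
      _ = ν e * (θ₀ - w) := mul_comm _ _
  have hqdiff : f.queue e θ₀ - f.queue e w
      = (∫ s in w..θ₀, f.aRate e s) - ∫ s in w..θ₀, f.bRate e (s + τ e) := by
    rw [queue_eq, queue_eq]
    have hA := f.FPs_diff e w θ₀
    have hB := f.FMs_diff e (w + τ e) (θ₀ + τ e)
    have hC : ∫ s in w..θ₀, f.bRate e (s + τ e)
        = ∫ s in (w + τ e)..(θ₀ + τ e), f.bRate e s :=
      intervalIntegral.integral_comp_add_right _ _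
    rw [hC]
    linarith
  rw [hwq, sub_zero, hbconst] at hqdiff
  linarith

lemma saturated_phase2 (e : E) {θ : ℝ} (h1 : f.that (∑ j, d j) < θ) (h2 : θ < H - τ e) :
    f.bRate e (θ + τ e) = ν e := by
  have hfe := hf.1
  have hth0 := f.that_nonneg hfe hν hτ he₀ (∑ j, d j)
  have h0 : 0 ≤ θ := le_of_lt (lt_of_le_of_lt hth0 h1)
  have hqc := hfe.2.1 e θ ⟨h0, h2⟩
  by_cases hq : 0 < f.queue e θ
  · rwa [if_pos hq] at hqc
  · have hq0 : f.queue e θ = 0 := le_antisymm (not_lt.mp hq) (f.queue_nonneg hfe e (hτ e) θ)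
    have hT : f.exitTime e θ = θ + τ e := by
      rw [exitTime_def, hq0, zero_div, add_zero]
    have hTlt : f.exitTime e θ < H := by rw [hT]; linarith
    have hin : e ∈ activeEdges H (fun e'' => f.exitTime e'' θ) := (f.mem_active_iff θ e).mpr hTlt
    have hθtb : θ ≤ f.tbar := f.le_tbar_of_active hfe hν hτ hTlt
    have hνA : f.nuA θ < ∑ j, d j := f.nuA_lt_D_of_gt_that hfe hν hτ he₀ h1 hθtb
    have hνApos : 0 < f.nuA θ :=
      lt_of_lt_of_le (hν e) (Finset.single_le_sum (fun e' _ => (hν e').le) hin)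
    have hθH : θ < H := by linarith [hτ e]
    have ha : f.aRate e θ = (∑ j, d j) * (ν e / f.nuA θ) := by
      rw [f.aRate_induced hf e ⟨h0, hθH⟩]
      congr 1
      rw [gbar, if_pos hin]
      rfl
    have hge : ν e ≤ f.aRate e θ := by
      rw [ha, show (∑ j, d j) * (ν e / f.nuA θ) = ν e * ((∑ j, d j) / f.nuA θ) from by ring]
      nth_rewrite 1 [← mul_one (ν e)]
      exact mul_le_mul_of_nonneg_left ((one_le_div hνApos).mpr hνA.le) (hν e).le
    rw [if_neg hq] at hqc
    have hge' : ν e ≤ ∑ j, f.fin e j θ := hge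
    rw [bRate, hqc]
    exact min_eq_right hge'

lemma FMs_final (e : E) :
    f.FMs e H = f.FPs e (f.that (∑ j, d j)) + ν e * max (H - f.that (∑ j, d j) - τ e) 0 := by
  have hfe := hf.1
  set t := f.that (∑ j, d j) with htdef
  have ht0 : 0 ≤ t := f.that_nonneg hfe hν hτ he₀ _
  have httb : t ≤ f.tbar := f.that_le_tbar hfe hν hτ he₀ _
  have htbH : f.tbar < H := f.tbar_lt_H hfe hν hτ he₀
  by_cases hτH : H ≤ τ e
  · have hFM : f.FMs e H = 0 := f.FMs_zero_of_le_tau e hτH (hτ e)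
    have hFP : f.FPs e t = 0 := by
      have hdiff := f.FPs_diff e 0 t
      rw [f.FPs_zero_of_nonpos e le_rfl, sub_zero] at hdiff
      rw [hdiff]
      refine myInt_zero_Ioo ht0 ?_
      intro s hs
      refine f.aRate_inactive_zero hν hτ he₀ hD hf e hs.1.le (lt_of_lt_of_le hs.2 httb) ?_
      push_neg
      have := f.exitTime_lb hfe e (hτ e) (hν e) s
      linarith [hs.1]
    rw [hFM, hFP, max_eq_right (by linarith), mul_zero, add_zero]
  · push_neg at hτH
    by_cases hcase : t ≤ H - τ e
    · have hq0 : f.queue e t = 0 := f.queue_zero_phase1 hν hτ he₀ hD hf e ht0 le_rfl hcase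
      have hFMt : f.FMs e (t + τ e) = f.FPs e t := by
        have hqe := f.queue_eq e t
        rw [hq0] at hqe
        linarith
      have hsat : f.FMs e H - f.FMs e (t + τ e) = ν e * (H - τ e - t) := by
        have hdiff := f.FMs_diff e (t + τ e) H
        have hsub : ∫ s in (t + τ e)..H, f.bRate e s
            = ∫ s in t..(H - τ e), f.bRate e (s + τ e) := by
          rw [intervalIntegral.integral_comp_add_right, show H - τ e + τ e = H from by ring]
        rw [hsub] at hdiff
        rw [hdiff]
        exact myInt_const_Ioo hcase fun s hs =>
          f.saturated_phase2 hν hτ he₀ hD hf e hs.1 hs.2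
      rw [max_eq_left (by linarith)]
      have : ν e * (H - τ e - t) = ν e * (H - t - τ e) := by ring
      linarith
    · push_neg at hcase
      have h0Hτ : 0 ≤ H - τ e := by linarith
      have hq0 : f.queue e (H - τ e) = 0 :=
        f.queue_zero_phase1 hν hτ he₀ hD hf e h0Hτ hcase.le le_rfl
      have hFMH : f.FMs e H = f.FPs e (H - τ e) := by
        have hqe := f.queue_eq e (H - τ e)
        rw [show H - τ e + τ e = H from by ring, hq0] at hqe
        linarith
      have hFPt : f.FPs e t = f.FPs e (H - τ e) := by
        have hdiff := f.FPs_diff e (H - τ e) t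
        have hz : ∫ s in (H - τ e)..t, f.aRate e s = 0 := by
          refine myInt_zero_Ioo hcase.le ?_
          intro s hs
          refine f.aRate_inactive_zero hν hτ he₀ hD hf e (h0Hτ.trans hs.1.le)
            (lt_of_lt_of_le hs.2 httb) ?_
          push_neg
          have := f.exitTime_lb hfe e (hτ e) (hν e) s
          linarith [hs.1]
        rw [hz] at hdiff
        linarith
      rw [max_eq_right (by linarith), mul_zero, add_zero, hFPt, hFMH]

end Induced

lemma sum_FPs_eq {t : ℝ} (h0 : 0 ≤ t) (h1 : t ≤ H) :
    ∑ e, f.FPs e t = (∑ j, d j) * t := by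
  have hrw : ∑ e, f.FPs e t = ∫ s in (0:ℝ)..t, ∑ e, f.aRate e s := by
    rw [intervalIntegral.integral_finset_sum
      (fun e _ => (f.aRate_integrable e).intervalIntegrable)]
    exact Finset.sum_congr rfl fun e _ => f.FPs_eq e t
  rw [hrw]
  have hconst : ∫ s in (0:ℝ)..t, ∑ e, f.aRate e s = (∑ j, d j) * (t - 0) := by
    refine myInt_const_Ioo h0 ?_
    intro s hs
    have : ∑ e, f.aRate e s = ∑ j, ∑ e, f.fin e j s := by
      rw [Finset.sum_comm]
      rfl
    rw [this]
    exact Finset.sum_congr rfl fun j _ =>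
      f.conservation j s ⟨hs.1.le, lt_of_lt_of_le hs.2 h1⟩
  rw [hconst]
  ring

lemma cut_bound (hfe : f.Feasible) (hν : ∀ e, 0 < ν e) (hτ : ∀ e, 0 < τ e)
    (e : E) {t : ℝ} (h0 : 0 ≤ t) :
    f.FMs e H ≤ f.FPs e t + ν e * max (H - t - τ e) 0 := by
  by_cases hτH : H ≤ τ e
  · rw [f.FMs_zero_of_le_tau e hτH (hτ e)]
    have h1 := f.FPs_nonneg e t
    have h2 : 0 ≤ ν e * max (H - t - τ e) 0 := mul_nonneg (hν e).le (le_max_right _ _)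
    linarith
  · push_neg at hτH
    by_cases hcase : t ≤ H - τ e
    · have hq := f.queue_nonneg hfe e (hτ e) t
      rw [queue_eq] at hq
      have hint : f.FMs e H - f.FMs e (t + τ e) ≤ ν e * (H - t - τ e) := by
        have hdiff := f.FMs_diff e (t + τ e) H
        have hb : ∫ s in (t + τ e)..H, f.bRate e s ≤ ∫ _s in (t + τ e)..H, ν e :=
          myInt_mono_Ioo (by linarith) (f.bRate_integrable e).integrableOn
            ((MeasureTheory.integrableOn_const_iff).mpr (Or.inr measure_Ioo_lt_top))
            (fun s _ => f.bRate_le hfe hν e s)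
        rw [intervalIntegral.integral_const, smul_eq_mul] at hb
        have hr : (H - (t + τ e)) * ν e = ν e * (H - t - τ e) := by ring
        linarith
      rw [max_eq_left (by linarith)]
      linarith
    · push_neg at hcase
      have hq := f.queue_nonneg hfe e (hτ e) (H - τ e)
      rw [queue_eq, show H - τ e + τ e = H from by ring] at hq
      have hmono : f.FPs e (H - τ e) ≤ f.FPs e t := f.FPs_mono e hcase.le
      have h2 : 0 ≤ ν e * max (H - t - τ e) 0 := mul_nonneg (hν e).le (le_max_right _ _)
      linarith

lemma Fminus_zero_of_dead (e : E) (j : P) (σ : ℝ) (hτe : H ≤ τ e) :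
    f.Fminus e j σ = 0 := by
  have hz : ∀ t, f.fout e j t = 0 := fun t =>
    f.fout_supp e j t (by simp only [Set.mem_Ico, not_and, not_lt]; intro h; linarith)
  rw [Fminus]
  simp [funext hz]

end FlowOverTime
/-- On a parallel-edge network where the players receive the current
time and exit times as information, if every player uses the strategy `ḡ` (routing
proportionally to the capacities of the active edges), then in the induced feasible flow
over time every player's payoff is her proportional share of the system optimum:
`ρ_j = Opt · d_j / ∑_{j'} d_{j'}`. -/
theorem gbar_payoff_proportional_share
    {E P : Type} [Fintype E] [Fintype P] [Nonempty E]
    (τ ν : E → ℝ) (d : P → ℝ) (H : ℝ)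
    (hτ : ∀ e, 0 < τ e) (hν : ∀ e, 0 < ν e) (hd : ∀ j, 0 < d j) (hH : 0 < H)
    (Opt : ℝ)
    (hOpt : IsGreatest {v : ℝ | ∃ f : FlowOverTime E P τ ν d H,
        f.Feasible ∧ ∑ j, f.payoff j = v} Opt)
    (f : FlowOverTime E P τ ν d H)
    (hf : f.InducedBy (fun _ θ T e => gbar ν H T e)) :
    ∀ j, f.payoff j = Opt * d j / ∑ j', d j' := by
  intro j
  have hD : 0 < ∑ j', d j' := Finset.sum_pos (fun j' _ => hd j') ⟨j, Finset.mem_univ j⟩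
  have hfe := hf.1
  have htot : ∀ g : FlowOverTime E P τ ν d H, ∑ j', g.payoff j' = ∑ e, g.FMs e H := by
    intro g
    simp only [FlowOverTime.payoff, FlowOverTime.FMs]
    rw [Finset.sum_comm]
  have hsplit : f.payoff j = (d j / ∑ j', d j') * ∑ e, f.FMs e H :=
    f.payoff_split hν hτ hD hf j
  obtain ⟨f₀, hf₀feas, hv₀⟩ := hOpt.1
  by_cases hdead : ∀ e, H ≤ τ e
  · have hOpt0 : Opt = 0 := by
      rw [← hv₀, htot f₀]
      refine Finset.sum_eq_zero fun e _ => ?_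
      exact Finset.sum_eq_zero fun j' _ => f₀.Fminus_zero_of_dead e j' H (hdead e)
    have hp0 : f.payoff j = 0 := by
      rw [FlowOverTime.payoff]
      exact Finset.sum_eq_zero fun e _ => f.Fminus_zero_of_dead e j H (hdead e)
    rw [hp0, hOpt0]
    simp
  · push_neg at hdead
    have he₀ : ∃ e₀, τ e₀ < H := hdead
    have ht0 : 0 ≤ f.that (∑ j', d j') := f.that_nonneg hfe hν hτ he₀ _
    have htH : f.that (∑ j', d j') ≤ H :=
      ((f.that_le_tbar hfe hν hτ he₀ _).trans (f.tbar_lt_H hfe hν hτ he₀).le)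
    have hV : ∑ e, f.FMs e H
        = (∑ j', d j') * f.that (∑ j', d j')
          + ∑ e, ν e * max (H - f.that (∑ j', d j') - τ e) 0 := by
      rw [Finset.sum_congr rfl (fun e _ => f.FMs_final hν hτ he₀ hD hf e),
        Finset.sum_add_distrib, f.sum_FPs_eq ht0 htH]
    have hVle : ∑ e, f.FMs e H ≤ Opt := hOpt.2 ⟨f, hf.1, htot f⟩
    have hOptle : Opt ≤ ∑ e, f.FMs e H := by
      rw [← hv₀, htot f₀]
      calc ∑ e, f₀.FMs e H
          ≤ ∑ e, (f₀.FPs e (f.that (∑ j', d j'))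
              + ν e * max (H - f.that (∑ j', d j') - τ e) 0) :=
            Finset.sum_le_sum fun e _ => f₀.cut_bound hf₀feas hν hτ e ht0
        _ = (∑ j', d j') * f.that (∑ j', d j')
              + ∑ e, ν e * max (H - f.that (∑ j', d j') - τ e) 0 := by
            rw [Finset.sum_add_distrib, f₀.sum_FPs_eq ht0 htH]
        _ = ∑ e, f.FMs e H := hV.symm
    have hOptV : Opt = ∑ e, f.FMs e H := le_antisymm hOptle hVle
    rw [hsplit, ← hOptV]
    ring
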